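/- Let n and i be integers with 1 ≤ i < n−3. Then for every integer N there exists an integer m with m ≥ N and m > n such that the polynomial (1+x)^{m−n}·T^{i+3}((1+x)^n) is not a ℚ-linear combination of the polynomials T^j((1+x)^m) for j ∈ {1, 2, …, n} \ {i}; that is, it does not lie in the ℚ-linear span of {T^j((1+x)^m) : 1 ≤ j ≤ n, j ≠ i} in ℚ[x]. -/

import Mathlib

open Polynomial

/-- The operator `T p = x · p'` on `ℚ[x]`. -/
noncomputable def T : Polynomial ℚ → Polynomial ℚ := fun p => X * derivative p

open Finset

lemma coeff_T (p : ℚ[X]) (k : ℕ) : (T p).coeff k = k * p.coeff k := by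
  unfold T
  cases k with
  | zero => simp
  | succ k => rw [coeff_X_mul, coeff_derivative]; push_cast; ring

lemma coeff_T_iter (j : ℕ) (p : ℚ[X]) (k : ℕ) : (T^[j] p).coeff k = (k:ℚ)^j * p.coeff k := by
  induction j with
  | zero => simp
  | succ j ih => rw [Function.iterate_succ_apply', coeff_T, ih]; ring

/-- Stirling numbers of the second kind. -/
def St : ℕ → ℕ → ℕ
  | 0, 0 => 1
  | 0, _+1 => 0
  | _+1, 0 => 0
  | j+1, s+1 => (s+1) * St j (s+1) + St j s

lemma St_eq_zero : ∀ j s, j < s → St j s = 0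
  | 0, 0, h => by omega
  | 0, s+1, _ => rfl
  | j+1, 0, h => by omega
  | j+1, s+1, h => by
      show (s+1) * St j (s+1) + St j s = 0
      rw [St_eq_zero j (s+1) (by omega), St_eq_zero j s (by omega)]; ring

lemma St_diag : ∀ j, St j j = 1
  | 0 => rfl
  | j+1 => by
      show (j+1) * St j (j+1) + St j j = 1
      rw [St_eq_zero j (j+1) (by omega), St_diag j]; ring

lemma St_pos : ∀ j s, 1 ≤ s → s ≤ j → 0 < St j s
  | 0, s, h1, h2 => by omega
  | j+1, 0, h1, h2 => by omega
  | j+1, s+1, h1, h2 => by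
      show 0 < (s+1) * St j (s+1) + St j s
      rcases Nat.lt_or_ge (s+1) (j+1) with h | h
      · have := St_pos j (s+1) (by omega) (by omega)
        positivity
      · have : s = j := by omega
        subst this; rw [St_diag]; omega

lemma pow_eq_sum_St (k j : ℕ) :
    k ^ j = ∑ s ∈ range (j+1), St j s * k.descFactorial s := by
  induction j with
  | zero => simp [St]
  | succ j ih =>
    have hmul : ∀ s, k * k.descFactorial s = k.descFactorial (s+1) + s * k.descFactorial s := by
      intro s
      rcases Nat.lt_or_ge k s with h | h
      · rw [Nat.descFactorial_of_lt h, Nat.descFactorial_of_lt (by omega)]; ring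
      · rw [Nat.descFactorial_succ]
        have : k - s + s = k := by omega
        nlinarith [Nat.descFactorial_eq_zero_iff_lt (n := k) (k := s)]
    calc k ^ (j+1) = ∑ s ∈ range (j+1), St j s * (k * k.descFactorial s) := by
          rw [pow_succ, ih, Finset.sum_mul]; apply Finset.sum_congr rfl; intros; ring
      _ = ∑ s ∈ range (j+1), St j s * k.descFactorial (s+1)
          + ∑ s ∈ range (j+1), St j s * (s * k.descFactorial s) := by
          rw [← Finset.sum_add_distrib]; apply Finset.sum_congr rfl; intro s _; rw [hmul]; ring
      _ = ∑ s ∈ range (j+2), St (j+1) s * k.descFactorial s := by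
          rw [Finset.sum_range_succ' (fun s => St (j+1) s * k.descFactorial s) (j+1)]
          have h0 : St (j+1) 0 * k.descFactorial 0 = 0 := by
            show (0) * k.descFactorial 0 = 0
            ring
          rw [h0, Nat.add_zero]
          have : ∀ s ∈ range (j+1), St (j+1) (s+1) * k.descFactorial (s+1)
              = (s+1) * St j (s+1) * k.descFactorial (s+1) + St j s * k.descFactorial (s+1) := by
            intro s _; show ((s+1) * St j (s+1) + St j s) * _ = _; ring
          rw [Finset.sum_congr rfl this, Finset.sum_add_distrib]
          have h2 : ∑ s ∈ range (j+1), St j s * (s * k.descFactorial s)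
              = ∑ s ∈ range (j+1), (s+1) * St j (s+1) * k.descFactorial (s+1) := by
            rw [Finset.sum_range_succ' (fun s => St j s * (s * k.descFactorial s)) j]
            rw [Finset.sum_range_succ (fun s => (s+1) * St j (s+1) * k.descFactorial (s+1)) j]
            rw [St_eq_zero j (j+1) (by omega)]
            simp [mul_comm, mul_assoc, mul_left_comm]
          rw [h2]; ring

lemma desc_choose : ∀ s m k : ℕ, s ≤ m → s ≤ k →
    (m - s).choose (k - s) * m.descFactorial s = m.choose k * k.descFactorial s
  | 0, m, k, _, _ => by simp
  | s+1, m, k, hm, hk => by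
    have h1 : m.descFactorial (s+1) = (m-s) * m.descFactorial s := Nat.descFactorial_succ m s
    have h2 : k.descFactorial (s+1) = (k-s) * k.descFactorial s := Nat.descFactorial_succ k s
    have key : (m - (s+1)).choose (k - (s+1)) * (m - s) = (m-s).choose (k-s) * (k-s) := by
      have ha : m - s = (m - (s+1)) + 1 := by omega
      have hb : k - s = (k - (s+1)) + 1 := by omega
      rw [ha, hb, mul_comm]
      exact Nat.add_one_mul_choose_eq (m - (s+1)) (k - (s+1))
    have ih := desc_choose s m k (by omega) (by omega)
    calc (m - (s+1)).choose (k - (s+1)) * m.descFactorial (s+1)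
        = ((m - (s+1)).choose (k - (s+1)) * (m - s)) * m.descFactorial s := by rw [h1]; ring
      _ = (k-s) * ((m-s).choose (k-s) * m.descFactorial s) := by rw [key]; ring
      _ = (k-s) * (m.choose k * k.descFactorial s) := by rw [ih]
      _ = m.choose k * k.descFactorial (s+1) := by rw [h2]; ring

lemma coeff_Xpow_mul (q : ℚ[X]) (s k : ℕ) :
    (X ^ s * q).coeff k = if s ≤ k then q.coeff (k - s) else 0 := by
  rw [mul_comm, Polynomial.coeff_mul_X_pow']

lemma iter_expand (M j : ℕ) (hj : j ≤ M) :
    T^[j] ((1 + X : ℚ[X])^M) = ∑ s ∈ range (j+1),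
      ((St j s * M.descFactorial s : ℕ) : ℚ) • (X^s * (1+X)^(M - s)) := by
  ext k
  rw [coeff_T_iter, Polynomial.finset_sum_coeff]
  rw [Polynomial.coeff_one_add_X_pow]
  have hterm : ∀ s ∈ range (j+1),
      ((((St j s * M.descFactorial s : ℕ) : ℚ) • (X^s * (1+X)^(M - s)) : ℚ[X])).coeff k
      = ((M.choose k * (St j s * k.descFactorial s) : ℕ) : ℚ) := by
    intro s hs
    have hsM : s ≤ M := le_trans (by simpa [Nat.lt_succ_iff] using (mem_range.mp hs)) hj
    rw [Polynomial.coeff_smul, coeff_Xpow_mul, Polynomial.coeff_one_add_X_pow]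
    by_cases hsk : s ≤ k
    · rw [if_pos hsk]
      have := desc_choose s M k hsM hsk
      push_cast
      have : ((M - s).choose (k - s) : ℚ) * M.descFactorial s = M.choose k * k.descFactorial s := by
        exact_mod_cast congrArg (Nat.cast : ℕ → ℚ) this
      rw [smul_eq_mul]
      nlinarith [this]
    · rw [if_neg hsk, smul_zero]
      rw [Nat.descFactorial_of_lt (by omega)]
      push_cast
      ring
  rw [Finset.sum_congr rfl hterm]
  have hcast : ((k:ℚ))^j = ∑ s ∈ range (j+1), (St j s : ℚ) * (k.descFactorial s : ℚ) := by
    exact_mod_cast congrArg (Nat.cast : ℕ → ℚ) (pow_eq_sum_St k j)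
  push_cast
  rw [← Finset.mul_sum, ← hcast]
  ring

lemma endgame {B D q : ℚ} (hq0 : 0 < q) (hD0 : 0 < D) (h : 1/q ≤ B/(D*q)) : D ≤ B := by
  have hDq : (0:ℚ) < D * q := mul_pos hD0 hq0
  rw [div_le_div_iff₀ hq0 hDq] at h
  nlinarith

lemma lagrange_key (n i : ℕ) (P : ℚ[X]) (hP : P.degree < (n+1 : ℕ)) :
    ∑ k ∈ range (n+1), (Lagrange.basis (range (n+1)) (fun t : ℕ => (t:ℚ)) k).coeff i
        * P.eval (k:ℚ) = P.coeff i := by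
  have hinj : Set.InjOn (fun t : ℕ => (t:ℚ)) (range (n+1)) :=
    fun a _ b _ h => Nat.cast_injective h
  have hcard : P.degree < (#(range (n+1)) : ℕ) := by simpa using hP
  have h := Lagrange.eq_interpolate hinj hcard
  calc ∑ k ∈ range (n+1), (Lagrange.basis (range (n+1)) (fun t : ℕ => (t:ℚ)) k).coeff i
        * P.eval (k:ℚ)
      = (Lagrange.interpolate (range (n+1)) (fun t : ℕ => (t:ℚ))
          (fun x => P.eval ((x : ℕ) : ℚ))).coeff i := by
        rw [Lagrange.interpolate_apply, Polynomial.finset_sum_coeff]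
        apply Finset.sum_congr rfl
        intro k _
        rw [Polynomial.coeff_C_mul]
        ring
    _ = P.coeff i := by rw [← h]

/-- Let `1 ≤ i < n−3`.  Then for every `N` there exists `m ≥ N` with `m > n` such that
`(1+x)^{m−n}·T^{i+3}((1+x)^n)` does not lie in the `ℚ`-linear span of the polynomials
`T^j((1+x)^m)` for `j ∈ {1, …, n} \ {i}`. -/
theorem stmt7 (n i : ℕ) (hi : 1 ≤ i) (hin : i < n - 3) :
    ∀ N : ℕ, ∃ m : ℕ, N ≤ m ∧ n < m ∧
      (1 + X) ^ (m - n) * T^[i + 3] ((1 + X) ^ n) ∉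
        Submodule.span ℚ
          ((fun j => T^[j] ((1 + X) ^ m)) '' {j : ℕ | 1 ≤ j ∧ j ≤ n ∧ j ≠ i}) := by
  have hn : i + 3 < n := by omega
  intro N
  -- notation
  set d : ℕ → ℚ := fun s => (descPochhammer ℚ s).coeff i with hd
  set B : ℚ := ∑ s ∈ Icc (i+1) (i+3), (St (i+3) s : ℚ) * (n.descFactorial s : ℚ) * |d s| with hB
  have hB0 : 0 ≤ B := by
    apply Finset.sum_nonneg; intro s _; positivity
  set m : ℕ := N + n + i + 5 + Nat.ceil B with hm
  have hNm : N ≤ m := by omega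
  have hnm : n < m := by omega
  refine ⟨m, hNm, hnm, ?_⟩
  intro hmem
  set c : ℕ → ℚ := fun k => (Lagrange.basis (range (n+1)) (fun t : ℕ => (t:ℚ)) k).coeff i with hc
  set φ : ℚ[X] →ₗ[ℚ] ℚ :=
    ∑ k ∈ range (n+1), (c k / (m.choose k : ℚ)) • (Polynomial.lcoeff ℚ k) with hφ
  have hφ_apply : ∀ p : ℚ[X], φ p = ∑ k ∈ range (n+1), c k / (m.choose k : ℚ) * p.coeff k := by
    intro p
    rw [hφ, LinearMap.sum_apply]
    apply Finset.sum_congr rfl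
    intro k _
    rw [LinearMap.smul_apply, Polynomial.lcoeff_apply, smul_eq_mul]
  have hchoose_ne : ∀ k, k ≤ n → (m.choose k : ℚ) ≠ 0 := by
    intro k hk
    have : 0 < m.choose k := Nat.choose_pos (by omega)
    positivity
  -- φ kills the generators
  have hgen : ∀ j, 1 ≤ j → j ≤ n → j ≠ i → φ (T^[j] ((1 + X : ℚ[X]) ^ m)) = 0 := by
    intro j h1 h2 h3
    rw [hφ_apply]
    have : ∀ k ∈ range (n+1), c k / (m.choose k : ℚ) * (T^[j] ((1 + X : ℚ[X]) ^ m)).coeff k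
        = c k * ((X:ℚ[X])^j).eval (k:ℚ) := by
      intro k hk
      rw [coeff_T_iter, Polynomial.coeff_one_add_X_pow]
      have hne := hchoose_ne k (by simpa [Nat.lt_succ_iff] using mem_range.mp hk)
      rw [Polynomial.eval_pow, Polynomial.eval_X]
      field_simp
    rw [Finset.sum_congr rfl this, lagrange_key n i]
    · rw [Polynomial.coeff_X_pow, if_neg (by omega)]
    · rw [Polynomial.degree_X_pow]
      exact_mod_cast by omega
  -- membership implies φ of the target is zero
  have hker : φ ((1 + X : ℚ[X]) ^ (m - n) * T^[i + 3] ((1 + X) ^ n)) = 0 := by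
    have hsub : ((fun j => T^[j] ((1 + X : ℚ[X]) ^ m)) '' {j : ℕ | 1 ≤ j ∧ j ≤ n ∧ j ≠ i})
        ⊆ (LinearMap.ker φ : Set ℚ[X]) := by
      rintro p ⟨j, ⟨h1, h2, h3⟩, rfl⟩
      exact hgen j h1 h2 h3
    have := Submodule.span_le.mpr hsub
    exact this hmem
  -- compute φ of the target
  have hφXs : ∀ s, s ≤ n → φ ((X:ℚ[X])^s * (1+X)^(m-s)) = d s / (m.descFactorial s : ℚ) := by
    intro s hs
    rw [hφ_apply]
    have hterm : ∀ k ∈ range (n+1), c k / (m.choose k:ℚ) * ((X:ℚ[X])^s * (1+X)^(m-s)).coeff k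
        = c k * ((descPochhammer ℚ s).eval (k:ℚ)) / (m.descFactorial s : ℚ) := by
      intro k hk
      have hkn : k ≤ n := by simpa [Nat.lt_succ_iff] using mem_range.mp hk
      have hne := hchoose_ne k hkn
      have hmdesc : (m.descFactorial s : ℚ) ≠ 0 := by
        have : 0 < m.descFactorial s := by
          rcases Nat.eq_zero_or_pos (m.descFactorial s) with h | h
          · exact absurd (Nat.descFactorial_eq_zero_iff_lt.mp h) (by omega)
          · exact h
        positivity
      rw [coeff_Xpow_mul, Polynomial.coeff_one_add_X_pow,
          descPochhammer_eval_eq_descFactorial ℚ k s]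
      by_cases hsk : s ≤ k
      · rw [if_pos hsk]
        have h := desc_choose s m k (by omega) hsk
        have h' : ((m-s).choose (k-s) : ℚ) * (m.descFactorial s : ℚ)
            = (m.choose k : ℚ) * (k.descFactorial s : ℚ) := by
          exact_mod_cast congrArg (Nat.cast : ℕ → ℚ) h
        field_simp
        linear_combination (c k) * h'
      · rw [if_neg hsk, Nat.descFactorial_of_lt (by omega)]
        push_cast
        ring
    rw [Finset.sum_congr rfl hterm, ← Finset.sum_div]
    congr 1
    have hdeg : (descPochhammer ℚ s).degree < ((n+1 : ℕ) : WithBot ℕ) := by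
      refine lt_of_le_of_lt (Polynomial.degree_le_natDegree) ?_
      rw [descPochhammer_natDegree]
      exact_mod_cast by omega
    exact lagrange_key n i _ hdeg
  have htarget : φ ((1 + X : ℚ[X]) ^ (m - n) * T^[i + 3] ((1 + X) ^ n))
      = ∑ s ∈ range (i+3+1), (St (i+3) s : ℚ) * (n.descFactorial s : ℚ) * d s
          / (m.descFactorial s : ℚ) := by
    rw [iter_expand n (i+3) (le_of_lt hn), Finset.mul_sum, map_sum]
    apply Finset.sum_congr rfl
    intro s hs
    have hsn : s ≤ n := by have := mem_range.mp hs; omega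
    have hpow : (1+X:ℚ[X])^(m-n) * ((X:ℚ[X])^s * (1+X)^(n-s)) = (X:ℚ[X])^s * (1+X)^(m-s) := by
      rw [mul_left_comm, ← pow_add]
      congr 2
      omega
    rw [mul_smul_comm, hpow, map_smul, hφXs s hsn, smul_eq_mul]
    push_cast
    ring
  -- lower bound the value, contradiction
  set f : ℕ → ℚ := fun s => (St (i+3) s : ℚ) * (n.descFactorial s : ℚ) * d s
      / (m.descFactorial s : ℚ) with hf
  have hsum0 : ∑ s ∈ range (i+3+1), f s = 0 := by
    rw [hf, ← htarget]
    exact hker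
  have hdesc_pos : ∀ t s : ℕ, s ≤ t → (0:ℚ) < (t.descFactorial s : ℚ) := by
    intro t s hst
    have : 0 < t.descFactorial s := by
      rcases Nat.eq_zero_or_pos (t.descFactorial s) with h | h
      · exact absurd (Nat.descFactorial_eq_zero_iff_lt.mp h) (by omega)
      · exact h
    exact_mod_cast this
  set q : ℚ := (m.descFactorial i : ℚ) with hq
  have hq0 : 0 < q := hdesc_pos m i (by omega)
  set D : ℕ := m - i - 2 with hD
  have hDB : B + 1 ≤ (D:ℚ) := by
    have h1 : D = N + n + 3 + Nat.ceil B := by omega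
    have h2 : B ≤ (Nat.ceil B : ℚ) := Nat.le_ceil B
    rw [h1]
    push_cast
    linarith
  have hD0 : (0:ℚ) < (D:ℚ) := by linarith
  have hd_lt : ∀ s, s < i → d s = 0 := by
    intro s hs
    apply Polynomial.coeff_eq_zero_of_natDegree_lt
    rw [descPochhammer_natDegree]
    exact hs
  have hdi : d i = 1 := by
    have hm1 : (descPochhammer ℚ i).Monic := monic_descPochhammer ℚ i
    have := hm1.coeff_natDegree
    rwa [descPochhammer_natDegree] at this
  have hsplit : ∑ s ∈ range (i+3+1), f s = f i + ∑ s ∈ Icc (i+1) (i+3), f s := by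
    have h1 : range (i+3+1) = range (i+1) ∪ Icc (i+1) (i+3) := by
      ext x
      simp only [Finset.mem_range, Finset.mem_union, Finset.mem_Icc]
      omega
    have hdisj : Disjoint (range (i+1)) (Icc (i+1) (i+3)) := by
      rw [Finset.disjoint_left]
      intro x hx hx'
      simp only [Finset.mem_range] at hx
      simp only [Finset.mem_Icc] at hx'
      omega
    rw [h1, Finset.sum_union hdisj, Finset.sum_range_succ]
    have hz : ∑ s ∈ range i, f s = 0 := by
      apply Finset.sum_eq_zero
      intro s hs
      rw [hf]
      simp only
      rw [hd_lt s (mem_range.mp hs)]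
      ring
    rw [hz]
    ring
  have hfi : f i = (St (i+3) i : ℚ) * (n.descFactorial i : ℚ) / q := by
    rw [hf]
    simp only
    rw [hdi, mul_one, hq]
  have hfi_ge : 1 / q ≤ f i := by
    rw [hfi]
    have h1 : (1:ℚ) ≤ (St (i+3) i : ℚ) * (n.descFactorial i : ℚ) := by
      have h2 : 0 < St (i+3) i := St_pos (i+3) i hi (by omega)
      have h3 : 0 < n.descFactorial i := by
        rcases Nat.eq_zero_or_pos (n.descFactorial i) with h | h
        · exact absurd (Nat.descFactorial_eq_zero_iff_lt.mp h) (by omega)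
        · exact h
      have : 1 ≤ St (i+3) i * n.descFactorial i := Nat.one_le_iff_ne_zero.mpr (by positivity)
      exact_mod_cast this
    gcongr
  have htail : ∀ s ∈ Icc (i+1) (i+3),
      |f s| ≤ (St (i+3) s : ℚ) * (n.descFactorial s : ℚ) * |d s| / ((D:ℚ) * q) := by
    intro s hs
    have hs' := Finset.mem_Icc.mp hs
    have hdescm : ((D:ℚ) * q) ≤ (m.descFactorial s : ℚ) := by
      have hsplit2 : (m - i).descFactorial (s - i) * m.descFactorial i = m.descFactorial s :=
        Nat.descFactorial_mul_descFactorial (by omega)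
      have hDle : D ≤ (m - i).descFactorial (s - i) := by
        have hmi : 8 ≤ m - i := by omega
        rcases (by omega : s = i+1 ∨ s = i+2 ∨ s = i+3) with h | h | h <;> subst h
        · simp only [Nat.add_sub_cancel_left, Nat.descFactorial_one]
          omega
        · have : i + 2 - i = 2 := by omega
          rw [this]
          show D ≤ (m - i).descFactorial 2
          rw [Nat.descFactorial_succ, Nat.descFactorial_one]
          calc D ≤ m - i := by omega
            _ ≤ (m - i - 1) * (m - i) := Nat.le_mul_of_pos_left _ (by omega)
        · have : i + 3 - i = 3 := by omega
          rw [this]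
          show D ≤ (m - i).descFactorial 3
          rw [Nat.descFactorial_succ, Nat.descFactorial_succ, Nat.descFactorial_one]
          have h2 : D = m - i - 2 := rfl
          calc D = m - i - 2 := rfl
            _ ≤ (m - i - 2) * ((m - i - 1) * (m - i)) :=
                Nat.le_mul_of_pos_right _ (Nat.mul_pos (by omega) (by omega))
      calc (D:ℚ) * q ≤ ((m - i).descFactorial (s - i) : ℚ) * q := by
            have : (D:ℚ) ≤ ((m - i).descFactorial (s - i) : ℚ) := by exact_mod_cast hDle
            nlinarith
        _ = (m.descFactorial s : ℚ) := by rw [hq]; exact_mod_cast congrArg (Nat.cast : ℕ → ℚ) hsplit2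
    have hds0 : (0:ℚ) < (m.descFactorial s : ℚ) := hdesc_pos m s (by omega)
    rw [hf]
    simp only
    rw [abs_div, abs_mul, abs_mul]
    rw [abs_of_nonneg (by positivity : (0:ℚ) ≤ (St (i+3) s : ℚ)),
        abs_of_nonneg (by positivity : (0:ℚ) ≤ (n.descFactorial s : ℚ)),
        abs_of_nonneg (le_of_lt hds0)]
    gcongr
  have habs : |∑ s ∈ Icc (i+1) (i+3), f s| ≤ B / ((D:ℚ) * q) := by
    calc |∑ s ∈ Icc (i+1) (i+3), f s| ≤ ∑ s ∈ Icc (i+1) (i+3), |f s| :=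
          Finset.abs_sum_le_sum_abs _ _
      _ ≤ ∑ s ∈ Icc (i+1) (i+3),
            (St (i+3) s : ℚ) * (n.descFactorial s : ℚ) * |d s| / ((D:ℚ) * q) :=
          Finset.sum_le_sum htail
      _ = B / ((D:ℚ) * q) := by rw [hB, Finset.sum_div]
  have heq : f i = -∑ s ∈ Icc (i+1) (i+3), f s := by
    have := hsum0
    rw [hsplit] at this
    linarith
  have hfinal : 1 / q ≤ B / ((D:ℚ) * q) := by
    calc 1 / q ≤ f i := hfi_ge
      _ = -∑ s ∈ Icc (i+1) (i+3), f s := heq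
      _ ≤ |∑ s ∈ Icc (i+1) (i+3), f s| := neg_le_abs _
      _ ≤ B / ((D:ℚ) * q) := habs
  have hcontr : (D:ℚ) ≤ B := endgame hq0 hD0 hfinal
  linarith only [hcontr, hDB]
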